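/- Let V be an m-ordered PSO on S and A, B ⊂ ℕ. If V(x⁰) ∈ int Γ_B for some x⁰ ∈ int Γ_A, then V(x) ∈ int Γ_B for every x ∈ int Γ_A. -/
import Mathlib


/-- The m-ordered polynomial operator associated to a hypermatrix `P`. -/
noncomputable def psoV (m : ℕ) (P : (Fin m → ℕ) → ℕ → ℝ) (x : ℕ → ℝ) (k : ℕ) : ℝ :=
  ∑' i : Fin m → ℕ, P i k * ∏ j, x (i j)

/-- The hypermatrix is stochastic. -/
def IsStochastic (m : ℕ) (P : (Fin m → ℕ) → ℕ → ℝ) : Prop :=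
  (∀ i k, 0 ≤ P i k) ∧ ∀ i, HasSum (fun k => P i k) 1

/-- symmetry of the hypermatrix in its first m indices. -/
def HypSymm (m : ℕ) (P : (Fin m → ℕ) → ℕ → ℝ) : Prop :=
  ∀ (σ : Equiv.Perm (Fin m)) (i : Fin m → ℕ) (k : ℕ), P (i ∘ σ) k = P i k

/-- membership in the infinite-dimensional simplex S. -/
def inS (x : ℕ → ℝ) : Prop := (∀ i, 0 ≤ x i) ∧ HasSum x 1

/-- the standard basis vector e_i. -/
def stdBasis (i : ℕ) : ℕ → ℝ := fun n => if n = i then 1 else 0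

/-- x and y are orthogonal: disjoint supports. -/
def Orth (x y : ℕ → ℝ) : Prop := ∀ k, x k * y k = 0

/-- V is orthogonal preserving on S. -/
def IsOP (m : ℕ) (P : (Fin m → ℕ) → ℕ → ℝ) : Prop :=
  ∀ x y : ℕ → ℝ, inS x → inS y → Orth x y → Orth (psoV m P x) (psoV m P y)

/-- V is surjective on S. -/
def SurjOnS (m : ℕ) (P : (Fin m → ℕ) → ℕ → ℝ) : Prop :=
  ∀ y : ℕ → ℝ, inS y → ∃ x : ℕ → ℝ, inS x ∧ psoV m P x = y

/-- membership in the relative interior of the face Γ_A of the simplex. -/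
def inIntFace (A : Set ℕ) (x : ℕ → ℝ) : Prop :=
  inS x ∧ (∀ i ∈ A, 0 < x i) ∧ ∀ i ∉ A, x i = 0

set_option maxHeartbeats 1000000 in
lemma hasSum_pi_prod (x : ℕ → ℝ) (hx0 : ∀ i, 0 ≤ x i) (hx : HasSum x 1) :
    ∀ n : ℕ, HasSum (fun i : Fin n → ℕ => ∏ j, x (i j)) 1 := by
  intro n
  induction n with
  | zero =>
      have h : (fun i : Fin 0 → ℕ => ∏ j, x (i j)) = fun _ => 1 := by
        funext i; simp
      rw [h]
      simpa using hasSum_unique (fun _ : Fin 0 → ℕ => (1 : ℝ))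
  | succ n ih =>
      have hnn : 0 ≤ (fun p : ℕ × (Fin n → ℕ) => x p.1 * ∏ j, x (p.2 j)) :=
        fun p => mul_nonneg (hx0 _) (Finset.prod_nonneg fun j _ => hx0 _)
      have h2 : Summable (fun b : ℕ => ∑' c : Fin n → ℕ, x b * ∏ j, x (c j)) := by
        have h3 : (fun b : ℕ => ∑' c : Fin n → ℕ, x b * ∏ j, x (c j)) = fun b => x b := by
          funext b
          rw [tsum_mul_left, ih.tsum_eq, mul_one]
        rw [h3]; exact hx.summable
      have hsum : Summable (fun p : ℕ × (Fin n → ℕ) => x p.1 * ∏ j, x (p.2 j)) :=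
        (summable_prod_of_nonneg hnn).2 ⟨fun b => ih.summable.mul_left (x b), h2⟩
      have hmul : HasSum (fun p : ℕ × (Fin n → ℕ) => x p.1 * ∏ j, x (p.2 j)) 1 := by
        simpa using hx.mul ih hsum
      rw [← Equiv.hasSum_iff (Fin.consEquiv (fun _ : Fin (n + 1) => ℕ))]
      have h : ((fun i : Fin (n+1) → ℕ => ∏ j, x (i j)) ∘ (Fin.consEquiv (fun _ : Fin (n + 1) => ℕ)))
          = fun p : ℕ × (Fin n → ℕ) => x p.1 * ∏ j, x (p.2 j) := by
        funext p
        simp [Fin.consEquiv, Fin.prod_univ_succ]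
      rw [h]
      exact hmul


lemma psoV_summable {m : ℕ} {P : (Fin m → ℕ) → ℕ → ℝ} (hP : IsStochastic m P)
    {x : ℕ → ℝ} (hx : inS x) (k : ℕ) :
    Summable (fun i : Fin m → ℕ => P i k * ∏ j, x (i j)) := by
  refine Summable.of_nonneg_of_le
    (fun i => mul_nonneg (hP.1 i k) (Finset.prod_nonneg fun j _ => hx.1 _))
    (fun i => ?_) (hasSum_pi_prod x hx.1 hx.2 m).summable
  have hle : P i k ≤ 1 := le_hasSum (hP.2 i) k (fun j _ => hP.1 i j)
  exact mul_le_of_le_one_left (Finset.prod_nonneg fun j _ => hx.1 _) hle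

lemma psoV_zero_iff {m : ℕ} {P : (Fin m → ℕ) → ℕ → ℝ} (hP : IsStochastic m P)
    {A : Set ℕ} {x : ℕ → ℝ} (hx : inIntFace A x) (k : ℕ) :
    psoV m P x k = 0 ↔ ∀ i : Fin m → ℕ, (∀ j, i j ∈ A) → P i k = 0 := by
  constructor
  · intro h0 i hi
    have hspos : 0 < ∏ j, x (i j) :=
      Finset.prod_pos (fun j _ => hx.2.1 _ (hi j))
    have hterm : P i k * ∏ j, x (i j) ≤ 0 := by
      rw [← h0]
      exact Summable.le_tsum (psoV_summable hP hx.1 k) i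
        (fun j _ => mul_nonneg (hP.1 j k) (Finset.prod_nonneg fun l _ => hx.1.1 _))
    have h0' : P i k * ∏ j, x (i j) = 0 :=
      le_antisymm hterm (mul_nonneg (hP.1 i k) hspos.le)
    exact (mul_eq_zero.mp h0').resolve_right hspos.ne'
  · intro hall
    have hz : ∀ i : Fin m → ℕ, P i k * ∏ j, x (i j) = 0 := by
      intro i
      by_cases hi : ∀ j, i j ∈ A
      · rw [hall i hi, zero_mul]
      · push_neg at hi
        obtain ⟨j, hj⟩ := hi
        rw [Finset.prod_eq_zero (Finset.mem_univ j) (hx.2.2 _ hj), mul_zero]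
    unfold psoV
    rw [show (fun i : Fin m → ℕ => P i k * ∏ j, x (i j)) = fun _ => (0 : ℝ) from funext hz]
    exact tsum_zero

lemma psoV_hasSum {m : ℕ} {P : (Fin m → ℕ) → ℕ → ℝ} (hP : IsStochastic m P)
    {x : ℕ → ℝ} (hx : inS x) : HasSum (psoV m P x) 1 := by
  set g : (Fin m → ℕ) → ℝ := fun i => ∏ j, x (i j) with hgdef
  have hg : HasSum g 1 := hasSum_pi_prod x hx.1 hx.2 m
  set F : (Fin m → ℕ) × ℕ → ℝ := fun p => P p.1 p.2 * g p.1 with hFdef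
  have hFnn : 0 ≤ F := fun p =>
    mul_nonneg (hP.1 p.1 p.2) (Finset.prod_nonneg fun j _ => hx.1 _)
  have hfib : ∀ i, HasSum (fun k => F (i, k)) (g i) := by
    intro i
    simpa using (hP.2 i).mul_right (g i)
  have hFsumm : Summable F :=
    (summable_prod_of_nonneg hFnn).2
      ⟨fun i => (hfib i).summable, by
        have : (fun i => ∑' k, F (i, k)) = g := funext fun i => (hfib i).tsum_eq
        rw [this]; exact hg.summable⟩
  have hFsum : HasSum F 1 := by
    have ht : ∑' p, F p = 1 := by
      rw [Summable.tsum_prod' hFsumm (fun i => (hfib i).summable)]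
      have : (fun i => ∑' k, F (i, k)) = g := funext fun i => (hfib i).tsum_eq
      calc ∑' i, ∑' k, F (i, k) = ∑' i, g i := by rw [show (fun i => ∑' k, F (i,k)) = g from this]
        _ = 1 := hg.tsum_eq
    exact ht ▸ hFsumm.hasSum
  have hF' : HasSum (F ∘ (Equiv.prodComm ℕ (Fin m → ℕ))) 1 :=
    (Equiv.hasSum_iff _).2 hFsum
  have hfib2 : ∀ k, HasSum (fun i : Fin m → ℕ => (F ∘ (Equiv.prodComm ℕ (Fin m → ℕ))) (k, i))
      (psoV m P x k) := fun k => (psoV_summable hP hx k).hasSum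
  exact hF'.prod_fiberwise hfib2


theorem stmt6 (m : ℕ) (hm : 1 ≤ m) (P : (Fin m → ℕ) → ℕ → ℝ)
    (hP : IsStochastic m P) (A B : Set ℕ)
    (h : ∃ x0 : ℕ → ℝ, inIntFace A x0 ∧ inIntFace B (psoV m P x0)) :
    ∀ x : ℕ → ℝ, inIntFace A x → inIntFace B (psoV m P x) := by
  obtain ⟨x0, hx0A, hx0B⟩ := h
  intro x hxA
  have hnn : ∀ k, 0 ≤ psoV m P x k := fun k =>
    tsum_nonneg fun i => mul_nonneg (hP.1 i k) (Finset.prod_nonneg fun j _ => hxA.1.1 _)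
  refine ⟨⟨hnn, psoV_hasSum hP hxA.1⟩, ?_, ?_⟩
  · intro k hk
    have h1 : psoV m P x0 k ≠ 0 := (hx0B.2.1 k hk).ne'
    have h2 : psoV m P x k ≠ 0 := fun hz =>
      h1 ((psoV_zero_iff hP hx0A k).2 ((psoV_zero_iff hP hxA k).1 hz))
    exact lt_of_le_of_ne (hnn k) (Ne.symm h2)
  · intro k hk
    exact (psoV_zero_iff hP hxA k).2 ((psoV_zero_iff hP hx0A k).1 (hx0B.2.2 k hk))
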